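/- Let α > 2, a > 0 and c > 0, and define g_a(y) = ∫₀^∞ a/(a + (x² + y²)^{α/2}) dx for y ≥ 0. Then the integral ∫₀^∞ (1 − exp(−c · g_a(y))) dy is finite and satisfies ∫₀^∞ (1 − exp(−c · g_a(y))) dy ≤ c · (π/2) · a^{2/α} · (π/α) · csc(2π/α). -/

import Mathlib

open MeasureTheory Real Set

/-- The inner integral `g_a(y) = ∫₀^∞ a / (a + (x² + y²)^(α/2)) dx`. -/
noncomputable def gInner (α a y : ℝ) : ℝ :=
  ∫ x in Set.Ioi (0 : ℝ), a / (a + (x ^ 2 + y ^ 2) ^ (α / 2))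



lemma beta_interval {s : ℝ} (h0 : 0 < s) (h1 : s < 1) :
    ∫ x in (0:ℝ)..1, x ^ (s - 1) * (1 - x) ^ (-s) = π / Real.sin (π * s) := by
  have h2 : (0:ℝ) < 1 - s := by linarith
  have hval : Complex.betaIntegral s (1 - s) = ((π / Real.sin (π * s) : ℝ) : ℂ) := by
    have hG := Complex.Gamma_mul_Gamma_eq_betaIntegral
      (s := (s:ℂ)) (t := ((1 - s : ℝ) : ℂ)) (by simpa using h0) (by simpa using h2)
    have hsum : (s:ℂ) + ((1 - s : ℝ) : ℂ) = 1 := by push_cast; ring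
    rw [hsum, Complex.Gamma_one, one_mul] at hG
    have hrefl := Complex.Gamma_mul_Gamma_one_sub (s : ℂ)
    have h1s : ((1 - s : ℝ) : ℂ) = 1 - (s:ℂ) := by push_cast; ring
    rw [h1s] at hG
    rw [← hG, hrefl]
    push_cast [Complex.ofReal_sin]
    ring
  have hbeta : Complex.betaIntegral s (1 - s)
      = ((∫ x in (0:ℝ)..1, x ^ (s - 1) * (1 - x) ^ (-s) : ℝ) : ℂ) := by
    rw [Complex.betaIntegral, ← intervalIntegral.integral_ofReal]
    apply intervalIntegral.integral_congr
    intro x hx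
    rw [uIcc_of_le zero_le_one] at hx
    have hx0 : (0:ℝ) ≤ x := hx.1
    have hx1 : (0:ℝ) ≤ 1 - x := by linarith [hx.2]
    push_cast [Complex.ofReal_cpow hx0, Complex.ofReal_cpow hx1]
    ring_nf
  have := hbeta.symm.trans hval
  exact_mod_cast this


lemma beta_Ioi {s : ℝ} (h0 : 0 < s) (h1 : s < 1)
    (hI : ∫ x in (0:ℝ)..1, x ^ (s - 1) * (1 - x) ^ (-s) = π / Real.sin (π * s)) :
    ∫ t in Ioi (0:ℝ), t ^ (s - 1) / (1 + t) = π / Real.sin (π * s) := by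
  set f : ℝ → ℝ := fun u => u / (1 - u) with hf
  have hderiv : ∀ u ∈ Ioo (0:ℝ) 1, HasDerivWithinAt f (((1 - u) ^ 2)⁻¹) (Ioo 0 1) u := by
    intro u hu
    have hne : (1:ℝ) - u ≠ 0 := by intro h; linarith [sub_eq_zero.mp h, hu.2]
    have h := (hasDerivAt_id u).div ((hasDerivAt_const u (1:ℝ)).sub (hasDerivAt_id u)) hne
    simp only [id_eq, Pi.sub_apply] at h
    have heq : (1 * (1 - u) - u * (0 - 1)) / (1 - u) ^ 2 = ((1 - u) ^ 2)⁻¹ := by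
      field_simp
      ring
    rw [heq] at h
    exact h.hasDerivWithinAt
  have hinj : InjOn f (Ioo 0 1) := by
    intro x hx y hy hxy
    have hx1 : (1:ℝ) - x ≠ 0 := by intro h; linarith [sub_eq_zero.mp h, hx.2]
    have hy1 : (1:ℝ) - y ≠ 0 := by intro h; linarith [sub_eq_zero.mp h, hy.2]
    rw [hf] at hxy
    field_simp at hxy
    nlinarith [hxy]
  have himg : f '' Ioo 0 1 = Ioi 0 := by
    ext t
    constructor
    · rintro ⟨u, hu, rfl⟩
      exact div_pos hu.1 (by linarith [hu.2])
    · intro ht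
      have ht' : (0:ℝ) < t := ht
      refine ⟨t / (1 + t), ⟨by positivity, ?_⟩, ?_⟩
      · rw [div_lt_one (by linarith)]; linarith
      · show t / (1 + t) / (1 - t / (1 + t)) = t
        have h2 : (1:ℝ) + t ≠ 0 := by linarith
        field_simp
        ring
  have key := integral_image_eq_integral_abs_deriv_smul measurableSet_Ioo hderiv hinj
    (fun t => t ^ (s - 1) / (1 + t))
  rw [himg] at key
  rw [intervalIntegral.integral_of_le zero_le_one, integral_Ioc_eq_integral_Ioo] at hI
  rw [key, ← hI]
  apply setIntegral_congr_fun measurableSet_Ioo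
  intro x hx
  have hx0 : (0:ℝ) < x := hx.1
  have hv : (0:ℝ) < 1 - x := by linarith [hx.2]
  have hfx : f x = x / (1 - x) := rfl
  have h1f : 1 + f x = (1 - x)⁻¹ := by rw [hfx]; field_simp; ring
  simp only [smul_eq_mul]
  rw [hfx, abs_of_pos (by positivity), div_rpow hx0.le hv.le, h1f,
    Real.rpow_sub hv, Real.rpow_one, Real.rpow_neg hv.le]
  have hA : (1 - x) ^ s ≠ 0 := by positivity
  field_simp


lemma phi_val {α a : ℝ} (hα : 2 < α) (ha : 0 < a)
    (hJ : ∫ t in Ioi (0:ℝ), t ^ (2 / α - 1) / (1 + t) = π / Real.sin (π * (2 / α))) :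
    ∫ r in Ioi (0:ℝ), r * (a / (a + r ^ α))
      = a ^ (2 / α) * ((π / α) * (Real.sin (π * (2 / α)))⁻¹) := by
  have hα0 : (0:ℝ) < α := by linarith
  have hαne : α ≠ 0 := hα0.ne'
  -- step 2 : ∫ u/(1+u^α) = (1/α) * J
  have step2 : ∫ u in Ioi (0:ℝ), u / (1 + u ^ α)
      = (1 / α) * (π / Real.sin (π * (2 / α))) := by
    have h := integral_comp_rpow_Ioi (fun t => (1 / α) * (t ^ (2 / α - 1) / (1 + t))) hαne
    rw [← hJ, ← integral_const_mul, ← h]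
    apply setIntegral_congr_fun measurableSet_Ioi
    intro x hx
    have hx0 : (0:ℝ) < x := hx
    simp only [smul_eq_mul]
    rw [abs_of_pos hα0]
    have hd : (0:ℝ) < 1 + x ^ α := by positivity
    have hexp : α * (2 / α - 1) = 2 - α := by field_simp
    rw [← Real.rpow_mul hx0.le, hexp]
    have hmerge : x ^ (α - 1) * x ^ (2 - α) = x := by
      rw [← Real.rpow_add hx0]; norm_num
    field_simp
    rw [hmerge]
  -- step 1 : scaling r = b u with b = a^(1/α)
  set b : ℝ := a ^ (1 / α) with hbdef
  have hb : (0:ℝ) < b := rpow_pos_of_pos ha _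
  have hbα : b ^ α = a := by
    rw [hbdef, ← Real.rpow_mul ha.le, one_div, inv_mul_cancel₀ hαne, Real.rpow_one]
  have hscale := integral_comp_mul_left_Ioi (fun r => r * (a / (a + r ^ α))) 0 hb
  rw [mul_zero] at hscale
  have hpt : ∀ u ∈ Ioi (0:ℝ), (fun r => r * (a / (a + r ^ α))) (b * u)
      = b * (u / (1 + u ^ α)) := by
    intro u hu
    have hu0 : (0:ℝ) < u := hu
    simp only
    rw [Real.mul_rpow hb.le hu0.le, hbα]
    have hd : (0:ℝ) < 1 + u ^ α := by positivity
    field_simp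
  rw [setIntegral_congr_fun measurableSet_Ioi hpt, integral_const_mul, smul_eq_mul] at hscale
  have hbb : b * b = a ^ (2 / α) := by
    rw [hbdef, ← Real.rpow_add ha, show 1 / α + 1 / α = 2 / α by ring]
  have hI : ∫ r in Ioi (0:ℝ), r * (a / (a + r ^ α))
      = b * (b * ∫ u in Ioi (0:ℝ), u / (1 + u ^ α)) := by
    rw [hscale, ← mul_assoc, mul_inv_cancel₀ hb.ne', one_mul]
  rw [hI, step2, ← mul_assoc, hbb]
  ring


variable {α a : ℝ}

private noncomputable def Fk (α a : ℝ) : ℝ × ℝ → ℝ :=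
  fun p => a / (a + (p.2 ^ 2 + p.1 ^ 2) ^ (α / 2))

lemma Fk_cont (hα : 2 < α) (ha : 0 < a) : Continuous (Fk α a) := by
  have hrc : Continuous fun t : ℝ => t ^ (α / 2) :=
    continuous_iff_continuousAt.2 fun x =>
      Real.continuousAt_rpow_const x _ (Or.inr (by positivity))
  apply continuous_const.div
  · exact continuous_const.add (hrc.comp ((continuous_snd.pow 2).add (continuous_fst.pow 2)))
  · intro p
    have : (0:ℝ) ≤ (p.2 ^ 2 + p.1 ^ 2) ^ (α / 2) := Real.rpow_nonneg (by positivity) _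
    positivity

lemma Fk_int (hα : 2 < α) (ha : 0 < a) : Integrable (Fk α a) := by
  have h2α : (Module.finrank ℝ (ℝ × ℝ) : ℝ) < α := by
    simp [Module.finrank_prod]; exact_mod_cast hα
  have hbound := (integrable_rpow_neg_one_add_norm_sq (E := ℝ × ℝ) (μ := volume) h2α).const_mul
    ((2:ℝ) ^ (α / 2) * max 1 a)
  refine hbound.mono' ((Fk_cont hα ha).aestronglyMeasurable) (ae_of_all _ fun p => ?_)
  have ht0 : (0:ℝ) ≤ p.2 ^ 2 + p.1 ^ 2 := by positivity
  have htr : (0:ℝ) ≤ (p.2 ^ 2 + p.1 ^ 2) ^ (α / 2) := Real.rpow_nonneg ht0 _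
  have hFp : 0 ≤ Fk α a p := by
    unfold Fk; positivity
  have hm : ‖p‖ ^ 2 ≤ p.2 ^ 2 + p.1 ^ 2 := by
    have h1 : ‖p‖ = max ‖p.1‖ ‖p.2‖ := rfl
    rcases le_total ‖p.1‖ ‖p.2‖ with h | h
    · rw [h1, max_eq_right h, Real.norm_eq_abs, sq_abs]
      nlinarith [sq_nonneg p.1]
    · rw [h1, max_eq_left h, Real.norm_eq_abs, sq_abs]
      nlinarith [sq_nonneg p.2]
  have h1m : (0:ℝ) < 1 + ‖p‖ ^ 2 := by positivity
  rw [Real.norm_eq_abs, abs_of_nonneg hFp, show (-α/2 : ℝ) = -(α/2) by ring,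
    Real.rpow_neg h1m.le, ← div_eq_mul_inv]
  have hden : (0:ℝ) < a + (p.2 ^ 2 + p.1 ^ 2) ^ (α / 2) := by positivity
  have hpow : (0:ℝ) < (1 + ‖p‖ ^ 2) ^ (α / 2) := Real.rpow_pos_of_pos h1m _
  rw [show Fk α a p = a / (a + (p.2 ^ 2 + p.1 ^ 2) ^ (α / 2)) from rfl,
    div_le_div_iff₀ hden hpow]
  set t := p.2 ^ 2 + p.1 ^ 2 with htdef
  have step1 : (1 + ‖p‖ ^ 2) ^ (α / 2) ≤ (1 + t) ^ (α / 2) :=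
    Real.rpow_le_rpow h1m.le (by linarith) (by positivity)
  have step2 : (1 + t) ^ (α / 2) ≤ 2 ^ (α / 2) * (1 + t ^ (α / 2)) := by
    have h2m : (1 + t) ≤ 2 * max 1 t := by
      have := le_max_left (1:ℝ) t; have := le_max_right (1:ℝ) t; linarith
    calc (1 + t) ^ (α / 2) ≤ (2 * max 1 t) ^ (α / 2) :=
          Real.rpow_le_rpow (by linarith) h2m (by positivity)
      _ = 2 ^ (α / 2) * (max 1 t) ^ (α / 2) :=
          Real.mul_rpow (by norm_num) (le_max_of_le_left zero_le_one)
      _ ≤ 2 ^ (α / 2) * (1 + t ^ (α / 2)) := by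
          have hmx : (max 1 t) ^ (α / 2) ≤ 1 + t ^ (α / 2) := by
            rcases le_total (1:ℝ) t with h | h
            · rw [max_eq_right h]
              nlinarith [Real.rpow_nonneg ht0 (α/2)]
            · rw [max_eq_left h, Real.one_rpow]
              nlinarith [Real.rpow_nonneg ht0 (α/2)]
          have h2p : (0:ℝ) ≤ 2 ^ (α / 2) := Real.rpow_nonneg (by norm_num) _
          nlinarith
  have hmax1 : (1:ℝ) ≤ max 1 a := le_max_left _ _
  have hmaxa : a ≤ max 1 a := le_max_right _ _
  have h2p : (0:ℝ) ≤ 2 ^ (α / 2) := Real.rpow_nonneg (by norm_num) _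
  calc a * (1 + ‖p‖ ^ 2) ^ (α / 2) ≤ a * (1 + t) ^ (α / 2) :=
        mul_le_mul_of_nonneg_left step1 ha.le
    _ ≤ a * (2 ^ (α / 2) * (1 + t ^ (α / 2))) := mul_le_mul_of_nonneg_left step2 ha.le
    _ ≤ 2 ^ (α / 2) * max 1 a * (a + t ^ (α / 2)) := by
        have key : a * (1 + t ^ (α / 2)) ≤ max 1 a * (a + t ^ (α / 2)) := by
          nlinarith [mul_nonneg (sub_nonneg.mpr hmaxa) htr,
            mul_nonneg (sub_nonneg.mpr hmax1) ha.le]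
        calc a * (2 ^ (α / 2) * (1 + t ^ (α / 2)))
            = 2 ^ (α / 2) * (a * (1 + t ^ (α / 2))) := by ring
          _ ≤ 2 ^ (α / 2) * (max 1 a * (a + t ^ (α / 2))) :=
              mul_le_mul_of_nonneg_left key h2p
          _ = 2 ^ (α / 2) * max 1 a * (a + t ^ (α / 2)) := by ring


lemma Fk_polar {α a : ℝ} (hα : 2 < α) (ha : 0 < a) :
    ∫ p : ℝ × ℝ, Fk α a p
      = (∫ r in Ioi (0:ℝ), r * (a / (a + r ^ α))) * (2 * π) := by
  rw [← integral_comp_polarCoord_symm (Fk α a)]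
  have htarget : polarCoord.target = Ioi (0:ℝ) ×ˢ Ioo (-π) π := rfl
  have hone : ∫ θ in Ioo (-π) π, (1:ℝ) = 2 * π := by
    simp [Real.volume_Ioo]
    rw [max_eq_left (by positivity : (0:ℝ) ≤ π + π)]
    ring
  calc ∫ p in polarCoord.target, p.1 • Fk α a (polarCoord.symm p)
      = ∫ p in Ioi (0:ℝ) ×ˢ Ioo (-π) π,
          (fun r => r * (a / (a + r ^ α))) p.1 * (fun _ => (1:ℝ)) p.2 := by
        rw [htarget]
        apply setIntegral_congr_fun (measurableSet_Ioi.prod measurableSet_Ioo)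
        intro p hp
        have hp1 : (0:ℝ) < p.1 := hp.1
        simp only [smul_eq_mul, mul_one]
        congr 1
        show Fk α a (polarCoord.symm p) = a / (a + p.1 ^ α)
        rw [polarCoord_symm_apply]
        show a / (a + ((p.1 * Real.sin p.2) ^ 2 + (p.1 * Real.cos p.2) ^ 2) ^ (α / 2)) = _
        have hb : (p.1 * Real.sin p.2) ^ 2 + (p.1 * Real.cos p.2) ^ 2 = p.1 ^ 2 := by
          have h := Real.sin_sq_add_cos_sq p.2; nlinarith [h]
        rw [hb, ← Real.rpow_natCast p.1 2, ← Real.rpow_mul hp1.le]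
        norm_num
        rw [show (2:ℝ) * (α / 2) = α by ring]
    _ = (∫ r in Ioi (0:ℝ), r * (a / (a + r ^ α))) * (∫ θ in Ioo (-π) π, (1:ℝ)) := by
        rw [Measure.volume_eq_prod]
        exact setIntegral_prod_mul (L := ℝ) (fun r => r * (a / (a + r ^ α))) (fun _ => (1:ℝ)) _ _
    _ = (∫ r in Ioi (0:ℝ), r * (a / (a + r ^ α))) * (2 * π) := by rw [hone]


lemma Fk_quarter {α a : ℝ} (hFint : Integrable (Fk α a)) :
    ∫ p : ℝ × ℝ, Fk α a p = 4 * ∫ p in Ioi (0:ℝ) ×ˢ Ioi (0:ℝ), Fk α a p := by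
  have hFint' : Integrable (Fk α a) (volume.prod volume) := by
    rwa [← Measure.volume_eq_prod]
  have inner : ∀ x : ℝ, ∫ y : ℝ, Fk α a (x, y) = 2 * ∫ y in Ioi (0:ℝ), Fk α a (x, y) := by
    intro x
    have h := integral_comp_abs (f := fun t => a / (a + (t ^ 2 + x ^ 2) ^ (α / 2)))
    simp only [sq_abs] at h
    exact h
  have outer : ∫ x : ℝ, (∫ y in Ioi (0:ℝ), Fk α a (x, y))
      = 2 * ∫ x in Ioi (0:ℝ), ∫ y in Ioi (0:ℝ), Fk α a (x, y) := by
    have h := integral_comp_abs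
      (f := fun t => ∫ y in Ioi (0:ℝ), a / (a + (y ^ 2 + t ^ 2) ^ (α / 2)))
    simp only [sq_abs] at h
    exact h
  have hfub : ∫ p in Ioi (0:ℝ) ×ˢ Ioi (0:ℝ), Fk α a p
      = ∫ x in Ioi (0:ℝ), ∫ y in Ioi (0:ℝ), Fk α a (x, y) := by
    rw [Measure.volume_eq_prod, ← Measure.prod_restrict]
    exact integral_prod _ (by rw [Measure.prod_restrict]; exact hFint'.integrableOn)
  calc ∫ p : ℝ × ℝ, Fk α a p = ∫ x : ℝ, ∫ y : ℝ, Fk α a (x, y) := by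
        rw [Measure.volume_eq_prod]; exact integral_prod _ hFint'
    _ = ∫ x : ℝ, 2 * ∫ y in Ioi (0:ℝ), Fk α a (x, y) := by simp_rw [inner]
    _ = 2 * ∫ x : ℝ, ∫ y in Ioi (0:ℝ), Fk α a (x, y) := integral_const_mul _ _
    _ = 2 * (2 * ∫ x in Ioi (0:ℝ), ∫ y in Ioi (0:ℝ), Fk α a (x, y)) := by rw [outer]
    _ = 4 * ∫ p in Ioi (0:ℝ) ×ˢ Ioi (0:ℝ), Fk α a p := by rw [hfub]; ring


/-- Let `α > 2`, `a > 0` and `c > 0`. Then the integral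
`∫₀^∞ (1 − exp(−c · g_a(y))) dy` is finite and satisfies
`∫₀^∞ (1 − exp(−c · g_a(y))) dy ≤ c · (π/2) · a^(2/α) · (π/α) · csc(2π/α)`. -/
theorem integral_one_sub_exp_neg_gInner (α a c : ℝ) (hα : 2 < α) (ha : 0 < a)
    (hc : 0 < c) :
    IntegrableOn (fun y : ℝ => 1 - Real.exp (-(c * gInner α a y))) (Set.Ioi 0) ∧
    (∫ y in Set.Ioi (0 : ℝ), (1 - Real.exp (-(c * gInner α a y))))
      ≤ c * (π / 2) * a ^ (2 / α) * (π / α) * (Real.sin (2 * π / α))⁻¹ := by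
  have hα0 : (0:ℝ) < α := by linarith
  have hs0 : (0:ℝ) < 2 / α := by positivity
  have hs1 : 2 / α < 1 := by rw [div_lt_one hα0]; linarith
  have hsin : 0 < Real.sin (π * (2 / α)) := by
    apply Real.sin_pos_of_pos_of_lt_pi
    · positivity
    · calc π * (2 / α) < π * 1 := by
            apply mul_lt_mul_of_pos_left hs1 Real.pi_pos
        _ = π := mul_one π
  have hJ := beta_Ioi hs0 hs1 (beta_interval hs0 hs1)
  have hphi := phi_val hα ha hJ
  have hFint := Fk_int hα ha
  have hprodInt : Integrable (Fk α a)
      ((volume.restrict (Ioi (0:ℝ))).prod (volume.restrict (Ioi (0:ℝ)))) := by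
    rw [Measure.prod_restrict, ← Measure.volume_eq_prod]
    exact hFint.integrableOn
  have hg_int : IntegrableOn (gInner α a) (Ioi 0) := hprodInt.integral_prod_left
  have hQ : ∫ p in Ioi (0:ℝ) ×ˢ Ioi (0:ℝ), Fk α a p
      = (π / 2) * (a ^ (2 / α) * ((π / α) * (Real.sin (π * (2 / α)))⁻¹)) := by
    have h4 := Fk_quarter hFint
    rw [Fk_polar hα ha, hphi] at h4
    linarith [h4]
  have hg_val : ∫ y in Ioi (0:ℝ), gInner α a y
      = (π / 2) * (a ^ (2 / α) * ((π / α) * (Real.sin (π * (2 / α)))⁻¹)) := by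
    rw [← hQ]
    have : ∫ p in Ioi (0:ℝ) ×ˢ Ioi (0:ℝ), Fk α a p
        = ∫ y in Ioi (0:ℝ), ∫ x in Ioi (0:ℝ), Fk α a (y, x) := by
      rw [Measure.volume_eq_prod, ← Measure.prod_restrict]
      exact integral_prod _ hprodInt
    rw [this]
    rfl
  have hg0 : ∀ y, 0 ≤ gInner α a y := fun y =>
    integral_nonneg fun x => div_nonneg ha.le
      (add_nonneg ha.le (Real.rpow_nonneg (by positivity) _))
  have hub : ∀ y, 1 - Real.exp (-(c * gInner α a y)) ≤ c * gInner α a y := by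
    intro y
    have h := Real.add_one_le_exp (-(c * gInner α a y))
    linarith
  have hlb : ∀ y, 0 ≤ 1 - Real.exp (-(c * gInner α a y)) := by
    intro y
    have h1 : Real.exp (-(c * gInner α a y)) ≤ Real.exp 0 :=
      Real.exp_le_exp.2 (by nlinarith [hg0 y])
    rw [Real.exp_zero] at h1
    linarith
  have hcg_int : IntegrableOn (fun y => c * gInner α a y) (Ioi (0:ℝ)) :=
    hg_int.const_mul c
  have hmeas : AEStronglyMeasurable (fun y : ℝ => 1 - Real.exp (-(c * gInner α a y)))
      (volume.restrict (Ioi (0:ℝ))) := by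
    have hco : Continuous fun t : ℝ => 1 - Real.exp (-(c * t)) := by fun_prop
    exact hco.comp_aestronglyMeasurable hg_int.aestronglyMeasurable
  have hint1 : IntegrableOn (fun y : ℝ => 1 - Real.exp (-(c * gInner α a y)))
      (Ioi (0:ℝ)) := by
    refine hcg_int.mono' hmeas (ae_of_all _ fun y => ?_)
    rw [Real.norm_eq_abs, abs_of_nonneg (hlb y)]
    exact hub y
  refine ⟨hint1, ?_⟩
  calc ∫ y in Ioi (0:ℝ), (1 - Real.exp (-(c * gInner α a y)))
      ≤ ∫ y in Ioi (0:ℝ), c * gInner α a y := integral_mono hint1 hcg_int hub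
    _ = c * ∫ y in Ioi (0:ℝ), gInner α a y := integral_const_mul _ _
    _ = c * (π / 2) * a ^ (2 / α) * (π / α) * (Real.sin (2 * π / α))⁻¹ := by
        rw [hg_val, show 2 * π / α = π * (2 / α) by ring]
        ring
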